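/- Let K be an algebraically closed field and 1 ≤ m ≤ n−1. (a) An element g ∈ GL_n(K) satisfies ⋀^m g = id on ⋀^m K^n if and only if g = ξ·1_n for a scalar ξ ∈ K with ξ^m = 1; that is, the kernel of ⋀^m : GL_n(K) → GL(⋀^m K^n) equals μ_m(K) := {ξ·1_n : ξ^m = 1}. (b) The kernel of the restriction of ⋀^m to SL_n(K) equals μ_d(K) := {ξ·1_n : ξ^d = 1}, where d = gcd(n,m). -/
import Mathlib


open Matrix Finset

/-- The set of `m`-element subsets of `Fin n`, indexing the standard basis `e_I` of `⋀^m R^n`. -/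
abbrev MSub (n m : ℕ) := {s : Finset (Fin n) // s.card = m}

/-- The matrix of the `m`-th exterior power `⋀^m g` of `g` in the standard basis `e_I` of
`⋀^m R^n`: its `(I, J)` entry is the `m × m` minor of `g` with rows `I` and columns `J`. -/
def extPow {R : Type*} [CommRing R] (n m : ℕ) (g : Matrix (Fin n) (Fin n) R) :
    Matrix (MSub n m) (MSub n m) R :=
  Matrix.of fun I J =>
    (Matrix.of fun a b : Fin m => g (I.1.orderEmbOfFin I.2 a) (J.1.orderEmbOfFin J.2 b)).det


-- helper 1: det zero transfer along injective row maps with same range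
lemma det_zero_of_range_eq {K : Type*} [CommRing K] {m n : ℕ}
    (g : Matrix (Fin n) (Fin n) K) (r r' c : Fin m → Fin n)
    (hr : Function.Injective r) (hr' : Function.Injective r')
    (hrange : Set.range r = Set.range r')
    (h : (g.submatrix r' c).det = 0) : (g.submatrix r c).det = 0 := by
  let σ : Fin m ≃ Fin m :=
    (Equiv.ofInjective r hr).trans ((Equiv.setCongr hrange).trans (Equiv.ofInjective r' hr').symm)
  have hcomp : ∀ x, r x = r' (σ x) := by
    intro x
    have : (Equiv.ofInjective r' hr') (σ x) = ⟨r x, hrange ▸ Set.mem_range_self x⟩ := by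
      simp only [σ, Equiv.trans_apply, Equiv.apply_symm_apply]
      rfl
    simpa [Equiv.ofInjective] using congrArg Subtype.val this.symm
  have : g.submatrix r c = (g.submatrix r' c).submatrix σ id := by
    ext a b; simp [hcomp a]
  rw [this, Matrix.det_permute, h, mul_zero]

-- helper 2: exists subset of card m containing j, avoiding k
lemma exists_good_subset {n m : ℕ} (hm1 : 1 ≤ m) (hm2 : m ≤ n - 1) (j k : Fin n) (hjk : j ≠ k) :
    ∃ J : Finset (Fin n), J.card = m ∧ j ∈ J ∧ k ∉ J := by
  have hcard : m - 1 ≤ (Finset.univ \ {j, k} : Finset (Fin n)).card := by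
    rw [Finset.card_sdiff_of_subset (Finset.subset_univ _)]
    have h2 : ({j, k} : Finset (Fin n)).card = 2 := by
      rw [Finset.card_insert_of_notMem (by simp [hjk]), Finset.card_singleton]
    rw [h2, Finset.card_univ, Fintype.card_fin]
    omega
  obtain ⟨T, hT, hTcard⟩ := Finset.exists_subset_card_eq hcard
  have hjT : j ∉ T := fun h => by simpa using hT h
  refine ⟨insert j T, ?_, Finset.mem_insert_self _ _, ?_⟩
  · rw [Finset.card_insert_of_notMem hjT, hTcard]; omega
  · intro hk
    rcases Finset.mem_insert.mp hk with h | h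
    · exact hjk h.symm
    · simpa [hjk.symm] using hT h

lemma scalar_of_extPow {K : Type*} [Field K] {n m : ℕ}
    (hm1 : 1 ≤ m) (hm2 : m ≤ n - 1) (g : Matrix (Fin n) (Fin n) K)
    (H : extPow n m g = 1) : ∃ ξ : K, ξ ^ m = 1 ∧ g = ξ • (1 : Matrix (Fin n) (Fin n) K) := by
  have hn2 : 2 ≤ n := by omega
  have HIJ : ∀ I J : MSub n m,
      (g.submatrix (I.1.orderEmbOfFin I.2) (J.1.orderEmbOfFin J.2)).det
        = if I = J then 1 else 0 := by
    intro I J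
    have := congrFun (congrFun (congrArg (Matrix.of.symm) H) I) J
    simpa [extPow, Matrix.one_apply, Matrix.submatrix] using this
  -- off-diagonal entries vanish
  have hz : ∀ k j : Fin n, k ≠ j → g k j = 0 := by
    intro k j hkj
    obtain ⟨J, hJc, hjJ, hkJ⟩ := exists_good_subset hm1 hm2 j k (Ne.symm hkj)
    set e : Fin m → Fin n := fun a => J.orderEmbOfFin hJc a with he
    have heinj : Function.Injective e := (J.orderEmbOfFin hJc).injective
    have hemem : ∀ a, e a ∈ J := fun a => J.orderEmbOfFin_mem hJc a
    have herange : Set.range e = ↑J := J.range_orderEmbOfFin hJc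
    set A : Matrix (Fin m) (Fin m) K := g.submatrix e e with hA
    have hAdet : A.det = 1 := by
      have := HIJ ⟨J, hJc⟩ ⟨J, hJc⟩; rwa [if_pos rfl] at this
    set v : Fin m → K := fun b => g k (e b) with hv
    have hrowdet : ∀ i₀ : Fin m, (A.updateRow i₀ v).det = 0 := by
      intro i₀
      set I' : Finset (Fin n) := insert k (J.erase (e i₀)) with hI'
      have hkJe : k ∉ J.erase (e i₀) := fun h => hkJ (Finset.mem_of_mem_erase h)
      have hI'c : I'.card = m := by
        rw [hI', Finset.card_insert_of_notMem hkJe, Finset.card_erase_of_mem (hemem i₀), hJc]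
        omega
      have hne : (⟨I', hI'c⟩ : MSub n m) ≠ ⟨J, hJc⟩ := by
        intro hEq
        have : I' = J := congrArg Subtype.val hEq
        exact hkJ (this ▸ Finset.mem_insert_self k _)
      have h0 : (g.submatrix (I'.orderEmbOfFin hI'c) e).det = 0 := by
        have := HIJ ⟨I', hI'c⟩ ⟨J, hJc⟩; rwa [if_neg hne] at this
      set r : Fin m → Fin n := fun a => if a = i₀ then k else e a with hr
      have hupdate : A.updateRow i₀ v = g.submatrix r e := by
        ext a b
        by_cases hai : a = i₀
        · subst hai; simp [hr, hv, Matrix.updateRow_apply]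
        · simp [hr, hai, Matrix.updateRow_apply, hA]
      have hrinj : Function.Injective r := by
        intro a b hab
        by_cases ha : a = i₀ <;> by_cases hb : b = i₀
        · rw [ha, hb]
        · exfalso; rw [hr] at hab; simp only [ha, hb, if_pos, if_neg, if_true] at hab
          exact hkJ (hab ▸ hemem b)
        · exfalso; rw [hr] at hab; simp only [ha, hb, if_neg, if_true] at hab
          exact hkJ (hab.symm ▸ hemem a)
        · rw [hr] at hab; simp only [ha, hb, if_neg] at hab; exact heinj hab
      have hrrange : Set.range r = Set.range (fun a => I'.orderEmbOfFin hI'c a) := by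
        rw [I'.range_orderEmbOfFin hI'c]
        ext x
        simp only [hI', Set.mem_range, Finset.coe_insert, Set.mem_insert_iff, Finset.coe_erase,
          Set.mem_diff, Finset.mem_coe, Set.mem_singleton_iff]
        constructor
        · rintro ⟨a, rfl⟩
          by_cases ha : a = i₀
          · left; simp [hr, ha]
          · right
            have : r a = e a := by simp [hr, ha]
            rw [this]
            exact ⟨hemem a, fun hcon => ha (heinj hcon)⟩
        · rintro (rfl | ⟨hxJ, hxne⟩)
          · exact ⟨i₀, by simp [hr]⟩
          · have : x ∈ Set.range e := herange ▸ hxJ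
            obtain ⟨a, rfl⟩ := this
            have ha : a ≠ i₀ := fun h => hxne (by rw [h])
            exact ⟨a, by simp [hr, ha]⟩
      rw [hupdate]
      exact det_zero_of_range_eq g r _ e hrinj
        (fun a b hab => (I'.orderEmbOfFin hI'c).injective hab) hrrange h0
    have hcram : v ᵥ* A.adjugate = 0 := by
      have h1 : v ᵥ* A.adjugate = (A.adjugate)ᵀ *ᵥ v := by
        rw [Matrix.mulVec_transpose]
      rw [h1, Matrix.adjugate_transpose, ← Matrix.cramer_eq_adjugate_mulVec]
      funext i₀
      rw [Matrix.cramer_transpose_apply]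
      exact hrowdet i₀
    have hv0 : v = 0 := by
      have : v ᵥ* (A.adjugate * A) = v := by
        rw [Matrix.adjugate_mul, hAdet, one_smul, Matrix.vecMul_one]
      rw [← this, ← Matrix.vecMul_vecMul, hcram, Matrix.zero_vecMul]
    have : j ∈ Set.range e := herange ▸ (Finset.mem_coe.mpr hjJ)
    obtain ⟨b, rfl⟩ := this
    exact congrFun hv0 b
  -- minor over (J,J) is product of diagonal
  have key : ∀ (J : Finset (Fin n)) (hJ : J.card = m), ∏ j ∈ J, g j j = 1 := by
    intro J hJ
    set e : Fin m → Fin n := fun a => J.orderEmbOfFin hJ a with he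
    have heinj : Function.Injective e := (J.orderEmbOfFin hJ).injective
    have hdiag : g.submatrix e e = Matrix.diagonal (fun a => g (e a) (e a)) := by
      ext a b
      by_cases hab : a = b
      · subst hab; simp [Matrix.diagonal_apply_eq]
      · rw [Matrix.diagonal_apply_ne _ hab, Matrix.submatrix_apply]
        exact hz _ _ (fun h => hab (heinj h))
    have hdet : (g.submatrix e e).det = 1 := by
      have := HIJ ⟨J, hJ⟩ ⟨J, hJ⟩; rwa [if_pos rfl] at this
    rw [hdiag, Matrix.det_diagonal] at hdet
    have himg : Finset.image e Finset.univ = J := by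
      apply Finset.coe_injective
      rw [Finset.coe_image, Finset.coe_univ, Set.image_univ]
      exact J.range_orderEmbOfFin hJ
    rw [← himg, Finset.prod_image (fun a _ b _ h => heinj h)]
    exact hdet
  -- all diagonal entries equal
  have hd : ∀ i k : Fin n, g i i = g k k := by
    intro i k
    by_cases hik : i = k
    · rw [hik]
    obtain ⟨J, hJc, hiJ, hkJ⟩ := exists_good_subset hm1 hm2 i k hik
    have hkJe : k ∉ J.erase i := fun h => hkJ (Finset.mem_of_mem_erase h)
    have hJ'c : (insert k (J.erase i)).card = m := by
      rw [Finset.card_insert_of_notMem hkJe, Finset.card_erase_of_mem hiJ, hJc]; omega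
    have h1 : g i i * ∏ j ∈ J.erase i, g j j = 1 := by
      rw [Finset.mul_prod_erase J (fun j => g j j) hiJ]; exact key J hJc
    have h2 : g k k * ∏ j ∈ J.erase i, g j j = 1 := by
      rw [← Finset.prod_insert (f := fun j => g j j) hkJe]; exact key _ hJ'c
    have hP : (∏ j ∈ J.erase i, g j j) ≠ 0 := by
      intro h0; rw [h0, mul_zero] at h1; exact one_ne_zero h1.symm
    exact mul_right_cancel₀ hP (h1.trans h2.symm)
  -- conclude
  have hn0 : 0 < n := by omega
  refine ⟨g ⟨0, hn0⟩ ⟨0, hn0⟩, ?_, ?_⟩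
  · obtain ⟨J, _, hJc⟩ := Finset.exists_subset_card_eq
      (show m ≤ (Finset.univ : Finset (Fin n)).card by simp; omega)
    have := key J hJc
    calc g ⟨0, hn0⟩ ⟨0, hn0⟩ ^ m = ∏ _j ∈ J, g ⟨0, hn0⟩ ⟨0, hn0⟩ := by
          rw [Finset.prod_const, hJc]
      _ = ∏ j ∈ J, g j j := Finset.prod_congr rfl (fun j _ => hd _ _)
      _ = 1 := this
  · ext i j
    by_cases hij : i = j
    · subst hij; simp [Matrix.one_apply, hd i ⟨0, hn0⟩]
    · simp [Matrix.one_apply, hij, hz i j hij]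

lemma extPow_scalar {K : Type*} [Field K] {n m : ℕ} (ξ : K) (hξ : ξ ^ m = 1) :
    extPow n m (ξ • (1 : Matrix (Fin n) (Fin n) K)) = 1 := by
  ext I J
  show (Matrix.of fun a b : Fin m =>
      (ξ • (1 : Matrix (Fin n) (Fin n) K)) (I.1.orderEmbOfFin I.2 a) (J.1.orderEmbOfFin J.2 b)).det
    = (1 : Matrix (MSub n m) (MSub n m) K) I J
  have hmat : (Matrix.of fun a b : Fin m =>
      (ξ • (1 : Matrix (Fin n) (Fin n) K)) (I.1.orderEmbOfFin I.2 a) (J.1.orderEmbOfFin J.2 b))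
      = ξ • ((1 : Matrix (Fin n) (Fin n) K).submatrix (I.1.orderEmbOfFin I.2) (J.1.orderEmbOfFin J.2)) := by
    ext a b; simp
  rw [hmat, Matrix.det_smul, Fintype.card_fin]
  rw [Matrix.one_apply]
  by_cases hIJ : I = J
  · subst hIJ
    have : (1 : Matrix (Fin n) (Fin n) K).submatrix (I.1.orderEmbOfFin I.2) (I.1.orderEmbOfFin I.2)
        = (1 : Matrix (Fin m) (Fin m) K) := by
      ext a b
      by_cases hab : a = b
      · subst hab; simp
      · rw [Matrix.submatrix_apply, Matrix.one_apply_ne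
          (fun h => hab ((I.1.orderEmbOfFin I.2).injective h)), Matrix.one_apply_ne hab]
    rw [this, Matrix.det_one, mul_one, hξ, if_pos rfl]
  · rw [if_neg hIJ]
    have hne : I.1 ≠ J.1 := fun h => hIJ (Subtype.ext h)
    have hnsub : ¬ I.1 ⊆ J.1 := by
      intro hsub
      exact hne (Finset.eq_of_subset_of_card_le hsub (by rw [I.2, J.2]))
    obtain ⟨x, hxI, hxJ⟩ := Finset.not_subset.mp hnsub
    have : x ∈ Set.range (fun a => I.1.orderEmbOfFin I.2 a) := by
      rw [I.1.range_orderEmbOfFin I.2]; exact hxI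
    obtain ⟨a, ha⟩ := this
    have : ((1 : Matrix (Fin n) (Fin n) K).submatrix (I.1.orderEmbOfFin I.2) (J.1.orderEmbOfFin J.2)).det = 0 := by
      apply Matrix.det_eq_zero_of_row_eq_zero a
      intro b
      rw [Matrix.submatrix_apply, Matrix.one_apply_ne]
      intro h
      apply hxJ
      have : x = J.1.orderEmbOfFin J.2 b := by rw [← ha]; exact h
      rw [this]
      exact J.1.orderEmbOfFin_mem J.2 b
    rw [this, mul_zero]


/-- Over an algebraically closed field: (a) the kernel of `⋀^m` on `GL_n(K)` consists of the
scalar matrices `ξ·1` with `ξ^m = 1`; (b) its kernel on `SL_n(K)` consists of the scalar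
matrices `ξ·1` with `ξ^{gcd(n,m)} = 1`. -/
theorem kernel_of_exterior_power {K : Type*} [Field K] [IsAlgClosed K] (n m : ℕ)
    (hm1 : 1 ≤ m) (hm2 : m ≤ n - 1) :
    (∀ g : Matrix (Fin n) (Fin n) K, IsUnit g.det →
      (extPow n m g = 1 ↔ ∃ ξ : K, ξ ^ m = 1 ∧ g = ξ • (1 : Matrix (Fin n) (Fin n) K))) ∧
    ∀ g : Matrix (Fin n) (Fin n) K, g.det = 1 →
      (extPow n m g = 1 ↔
        ∃ ξ : K, ξ ^ Nat.gcd n m = 1 ∧ g = ξ • (1 : Matrix (Fin n) (Fin n) K)) := by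
  constructor
  · intro g _
    constructor
    · exact scalar_of_extPow hm1 hm2 g
    · rintro ⟨ξ, hξ, rfl⟩
      exact extPow_scalar ξ hξ
  · intro g hdet
    constructor
    · intro H
      obtain ⟨ξ, hξm, rfl⟩ := scalar_of_extPow hm1 hm2 g H
      refine ⟨ξ, ?_, rfl⟩
      have hξn : ξ ^ n = 1 := by
        rwa [Matrix.det_smul, Matrix.det_one, mul_one, Fintype.card_fin] at hdet
      have h1 : orderOf ξ ∣ m := orderOf_dvd_of_pow_eq_one hξm
      have h2 : orderOf ξ ∣ n := orderOf_dvd_of_pow_eq_one hξn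
      exact orderOf_dvd_iff_pow_eq_one.mp (Nat.dvd_gcd h2 h1)
    · rintro ⟨ξ, hξ, rfl⟩
      apply extPow_scalar
      obtain ⟨c, hc⟩ := Nat.gcd_dvd_right n m
      rw [hc, pow_mul, hξ, one_pow]
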